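/- arXiv:1504.05285 — 3 statements merged into one kernel-verified Lean document; each statement's English description precedes it below -/
import Mathlib

section
/- Let T > 0 and K > 0 be constants. Let α and β be nonnegative functions in L¹((0,T)). Let A and B be integrable functions on (0,T) with A(t) ≥ 1 and B(t) > 0 for all t, such that A is absolutely continuous on (0,T) and continuous on [0,T). Suppose that for (almost every) t ∈ (0,T) one has A'(t) + B(t) ≤ K(α(t) + log B(t))·A(t) + β(t). Then for all t ∈ [0,T), sup_{0≤s≤t} A(s) + ∫₀ᵗ B(s) ds ≤ (2Q(t) + 1)·e^{Q(t)}, where Q(t) = (log A(0) + K·∫₀ᵗ α(s) ds + ∫₀ᵗ β(s) ds + 2K²t)·e^{Kt}. -/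
/-!
Logarithmic Gronwall inequality (Lemma 2.2 of Li--Titi, "Global well-posedness of strong
solutions to a tropical climate model").

Absolute continuity of `A` on `(0,T)` together with continuity on `[0,T)` is encoded via:
a derivative function `A'` which is integrable on `(0,T)`, `A` has derivative `A'` a.e. on
`(0,T)`, and the fundamental theorem of calculus `A t = A 0 + ∫_{(0,t)} A'` holds for all
`t ∈ [0,T)`.
-/

open MeasureTheory Set

open Filter Topology

lemma my_pow_int (k : ℕ) {t : ℝ} (ht : 0 ≤ t) :
    ∫ s in Ioo (0:ℝ) t, s ^ k = t ^ (k+1) / (k+1) := by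
  rw [← integral_Ioc_eq_integral_Ioo, ← intervalIntegral.integral_of_le ht,
    integral_pow]
  simp

lemma my_integral_gronwall {ψ a : ℝ → ℝ} {K M t₀ : ℝ} (hK : 0 ≤ K)
    (hψ_int : IntegrableOn ψ (Ioo 0 t₀))
    (hψ_le : ∀ t ∈ Icc (0:ℝ) t₀, ψ t ≤ M)
    (ha_mono : MonotoneOn a (Icc 0 t₀))
    (ha_nonneg : ∀ t ∈ Icc (0:ℝ) t₀, 0 ≤ a t)
    (hmain : ∀ t ∈ Icc (0:ℝ) t₀, ψ t ≤ a t + K * ∫ s in Ioo (0:ℝ) t, ψ s) :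
    ∀ t ∈ Icc (0:ℝ) t₀, ψ t ≤ a t * Real.exp (K * t) := by
  have key : ∀ n : ℕ, ∀ t ∈ Icc (0:ℝ) t₀,
      ψ t ≤ a t * (∑ k ∈ Finset.range n, (K*t)^k / (Nat.factorial k)) +
        M * ((K*t)^n / (Nat.factorial n)) := by
    intro n
    induction n with
    | zero => intro t ht; simpa using hψ_le t ht
    | succ n IH =>
      intro t ht
      have htpos : 0 ≤ t := ht.1
      have hKt : 0 ≤ K * t := mul_nonneg hK htpos
      -- integrand bound function
      set F : ℝ → ℝ := fun s => a t * (∑ k ∈ Finset.range n, (K*s)^k / (Nat.factorial k)) +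
        M * ((K*s)^n / (Nat.factorial n)) with hF
      have hFcont : Continuous F := by fun_prop
      have hsub : Ioo (0:ℝ) t ⊆ Ioo 0 t₀ := Ioo_subset_Ioo_right ht.2
      have hint1 : IntegrableOn ψ (Ioo 0 t) := hψ_int.mono_set hsub
      have hintF : IntegrableOn F (Ioo 0 t) :=
        (hFcont.integrableOn_Icc).mono_set Ioo_subset_Icc_self
      have hmono : ∫ s in Ioo (0:ℝ) t, ψ s ≤ ∫ s in Ioo (0:ℝ) t, F s := by
        refine setIntegral_mono_on hint1 hintF measurableSet_Ioo ?_
        intro s hs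
        have hs' : s ∈ Icc (0:ℝ) t₀ := ⟨hs.1.le, hs.2.le.trans ht.2⟩
        have := IH s hs'
        have hsum_nonneg : 0 ≤ ∑ k ∈ Finset.range n, (K*s)^k / (Nat.factorial k) := by
          refine Finset.sum_nonneg fun k _ => div_nonneg (pow_nonneg (mul_nonneg hK hs.1.le) k) (Nat.cast_nonneg _)
        refine le_trans (IH s hs') ?_
        have hale : a s ≤ a t := ha_mono hs' ht hs.2.le
        nlinarith [hsum_nonneg, hale]
      have hG : ∀ k : ℕ, IntegrableOn (fun s => (K*s)^k / (Nat.factorial k)) (Ioo 0 t) := by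
        intro k
        exact ((by fun_prop : Continuous fun s:ℝ => (K*s)^k / (Nat.factorial k)).integrableOn_Icc).mono_set
          Ioo_subset_Icc_self
      have hIk : ∀ k : ℕ, K * ∫ s in Ioo (0:ℝ) t, (K*s)^k / (Nat.factorial k)
          = (K*t)^(k+1) / (Nat.factorial (k+1)) := by
        intro k
        have heq : (fun s => (K*s)^k / (Nat.factorial k))
            = fun s => (K^k / (Nat.factorial k)) * s^k := by
          funext s; rw [mul_pow]; ring
        rw [heq, MeasureTheory.integral_const_mul, my_pow_int k htpos]
        have h1 : ((Nat.factorial (k+1) : ℝ)) = ((k:ℝ)+1) * (Nat.factorial k) := by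
          rw [Nat.factorial_succ]; push_cast; ring
        have h2 : (Nat.factorial k : ℝ) ≠ 0 := Nat.cast_ne_zero.2 (Nat.factorial_ne_zero k)
        have h3 : ((k:ℝ)+1) ≠ 0 := by positivity
        rw [h1, mul_pow]
        field_simp
        ring
      have hintF : ∫ s in Ioo (0:ℝ) t, F s
          = a t * (∑ k ∈ Finset.range n, ∫ s in Ioo (0:ℝ) t, (K*s)^k / (Nat.factorial k))
            + M * ∫ s in Ioo (0:ℝ) t, (K*s)^n / (Nat.factorial n) := by
        have hGsum : IntegrableOn (fun s => ∑ k ∈ Finset.range n, (K*s)^k / (Nat.factorial k)) (Ioo 0 t) := by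
          apply integrable_finset_sum
          intro k _; exact hG k
        rw [hF]
        rw [MeasureTheory.integral_add (hGsum.const_mul _) ((hG n).const_mul _),
          MeasureTheory.integral_const_mul, MeasureTheory.integral_const_mul,
          MeasureTheory.integral_finset_sum _ (fun k _ => hG k)]
      calc ψ t ≤ a t + K * ∫ s in Ioo (0:ℝ) t, ψ s := hmain t ht
        _ ≤ a t + K * ∫ s in Ioo (0:ℝ) t, F s := by nlinarith [hmono]
        _ = a t * (1 + ∑ k ∈ Finset.range n, (K*t)^(k+1) / (Nat.factorial (k+1)))
            + M * ((K*t)^(n+1) / (Nat.factorial (n+1))) := by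
          rw [hintF]
          simp only [← hIk, ← Finset.mul_sum]
          ring
        _ = a t * (∑ k ∈ Finset.range (n+1), (K*t)^k / (Nat.factorial k))
            + M * ((K*t)^(n+1) / (Nat.factorial (n+1))) := by
          rw [Finset.sum_range_succ']
          norm_num [add_comm]
  intro t ht
  have hKt : 0 ≤ K * t := mul_nonneg hK ht.1
  have h1 : ∀ n : ℕ, ψ t ≤ a t * Real.exp (K*t) + M * ((K*t)^n / (Nat.factorial n)) := by
    intro n
    refine le_trans (key n t ht) ?_
    gcongr
    · exact ha_nonneg t ht
    · exact Real.sum_le_exp_of_nonneg hKt n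
  have h2 : Tendsto (fun n : ℕ => a t * Real.exp (K*t) + M * ((K*t)^n / (Nat.factorial n)))
      atTop (𝓝 (a t * Real.exp (K*t) + M * 0)) :=
    tendsto_const_nhds.add ((FloorSemiring.tendsto_pow_div_factorial_atTop (K*t)).const_mul M)
  have := ge_of_tendsto' h2 h1
  simpa using this

lemma my_log_le {h : ℝ → ℝ} {c t : ℝ} (hc : 1 ≤ c) (ht : 0 < t)
    (hh_int : Integrable h) (hh_nonneg : ∀ s, 0 ≤ h s)
    {u : ℝ → ℝ} (hu : ∀ r, u r = c + ∫ s in Ioo (0:ℝ) r, h s)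
    (hu_cont : ContinuousOn u (Icc 0 t)) :
    Real.log (u t) ≤ Real.log c + ∫ r in Ioo (0:ℝ) t, h r / u r := by
  have hu_mono : Monotone u := by
    intro r r' hrr'
    rw [hu, hu]
    have := setIntegral_mono_set (s := Ioo (0:ℝ) r) (t := Ioo (0:ℝ) r') hh_int.integrableOn
      (ae_of_all _ hh_nonneg) (HasSubset.Subset.eventuallyLE (Ioo_subset_Ioo_right hrr'))
    linarith
  have hu_ge : ∀ r, c ≤ u r := by
    intro r
    rw [hu]
    have h0 : (0:ℝ) ≤ ∫ s in Ioo (0:ℝ) r, h s :=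
      setIntegral_nonneg measurableSet_Ioo (fun x _ => hh_nonneg x)
    linarith
  have hu_pos : ∀ r, 0 < u r := fun r => lt_of_lt_of_le (lt_of_lt_of_le one_pos hc) (hu_ge r)
  have hu_one : ∀ r, 1 ≤ u r := fun r => le_trans hc (hu_ge r)
  have hu0 : u 0 = c := by rw [hu]; simp
  have hu_meas : Measurable u := hu_mono.measurable
  have husub : ∀ a b : ℝ, 0 ≤ a → a ≤ b → u b - u a = ∫ r in a..b, h r := by
    intro a b ha hab
    rw [hu, hu]
    have hioo : ∀ x : ℝ, 0 ≤ x → ∫ s in Ioo (0:ℝ) x, h s = ∫ s in (0:ℝ)..x, h s := by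
      intro x hx
      rw [intervalIntegral.integral_of_le hx, integral_Ioc_eq_integral_Ioo]
    rw [hioo a ha, hioo b (ha.trans hab)]
    have := intervalIntegral.integral_interval_sub_left
      (hh_int.intervalIntegrable (a := 0) (b := b)) (hh_int.intervalIntegrable (a := 0) (b := a))
    linarith
  -- the step approximations
  set ν : ℕ → ℝ → ℝ := fun n r => (⌊r / (t/n)⌋₊ : ℝ) * (t/n) with hν
  have hν_nonneg : ∀ n r, 0 ≤ ν n r := by
    intro n r
    rcases le_or_gt t (0:ℝ) with h' | h'
    · exact mul_nonneg (Nat.cast_nonneg _) (by positivity)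
    · exact mul_nonneg (Nat.cast_nonneg _) (by positivity)
  have hν_le : ∀ n : ℕ, ∀ r : ℝ, 0 ≤ r → ν n r ≤ r := by
    intro n r hr
    rcases Nat.eq_zero_or_pos n with rfl | hn
    · simpa [hν] using hr
    · have hδ : 0 < t / n := div_pos ht (by exact_mod_cast hn)
      calc (⌊r / (t/n)⌋₊ : ℝ) * (t/n) ≤ (r / (t/n)) * (t/n) := by
            gcongr
            exact Nat.floor_le (by positivity)
        _ = r := by field_simp
  have hν_mono : ∀ n, Monotone (ν n) := by
    intro n r r' hrr'
    rcases le_or_gt (t/(n:ℝ)) 0 with h' | h'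
    · have h0 : (t/(n:ℝ)) = 0 := le_antisymm h' (div_nonneg ht.le (Nat.cast_nonneg n))
      simp [hν, h0]
    · have h2 : r / (t/n) ≤ r' / (t/n) := by gcongr
      exact mul_le_mul_of_nonneg_right (by exact_mod_cast Nat.floor_mono h2) h'.le
  -- integrability and measurability of the step approximations
  have hG_meas : ∀ n, AEStronglyMeasurable (fun r => h r / u (ν n r)) volume := fun n =>
    (hh_int.aemeasurable.div ((hu_meas.comp (hν_mono n).measurable)).aemeasurable).aestronglyMeasurable
  have hG_bd : ∀ n r, ‖h r / u (ν n r)‖ ≤ |h r| := by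
    intro n r
    rw [Real.norm_eq_abs, abs_div, abs_of_pos (hu_pos _)]
    exact div_le_self (abs_nonneg _) (hu_one _)
  have hG_int : ∀ n, Integrable (fun r => h r / u (ν n r)) := fun n =>
    Integrable.mono' hh_int.abs (hG_meas n) (ae_of_all _ (hG_bd n))
  have stepA : ∀ n : ℕ, 1 ≤ n →
      Real.log (u t) - Real.log c ≤ ∫ r in (0:ℝ)..t, h r / u (ν n r) := by
    intro n hn
    have hnR : (0:ℝ) < n := by exact_mod_cast hn
    have hδ : 0 < t / n := div_pos ht hnR
    set p : ℕ → ℝ := fun i => i * (t / n) with hp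
    have hp0 : p 0 = 0 := by simp [hp]
    have hpn : p n = t := by
        rw [hp]; dsimp only; rw [mul_div_assoc']; exact mul_div_cancel_left₀ t hnR.ne'
    have key_i : ∀ i : ℕ, Real.log (u (p (i+1))) - Real.log (u (p i))
        ≤ ∫ r in p i..p (i+1), h r / u (ν n r) := by
      intro i
      have hpi : (0:ℝ) ≤ p i := mul_nonneg (Nat.cast_nonneg _) hδ.le
      have hpii : p i ≤ p (i+1) := by
        simp only [hp]
        have : (i:ℝ) ≤ ((i+1:ℕ):ℝ) := by push_cast; linarith
        exact mul_le_mul_of_nonneg_right this hδ.le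
      have h1 : Real.log (u (p (i+1))) - Real.log (u (p i))
          ≤ (u (p (i+1)) - u (p i)) / u (p i) := by
        rw [← Real.log_div (ne_of_gt (hu_pos _)) (ne_of_gt (hu_pos _))]
        have h2 := Real.log_le_sub_one_of_pos (div_pos (hu_pos (p (i+1))) (hu_pos (p i)))
        have h3 : u (p (i+1)) / u (p i) - 1 = (u (p (i+1)) - u (p i)) / u (p i) := by
          rw [eq_div_iff (ne_of_gt (hu_pos (p i))), sub_mul, div_mul_cancel₀ _ (ne_of_gt (hu_pos (p i))), one_mul]
        linarith
      have h2 : (u (p (i+1)) - u (p i)) / u (p i) = ∫ r in p i..p (i+1), h r / u (p i) := by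
        rw [husub _ _ hpi hpii, intervalIntegral.integral_div]
      have h3 : (∫ r in p i..p (i+1), h r / u (p i))
          = ∫ r in p i..p (i+1), h r / u (ν n r) := by
        apply intervalIntegral.integral_congr_ae
        have hne : ∀ᵐ r : ℝ, r ≠ p (i+1) := by
          rw [ae_iff]
          have hset : {r : ℝ | ¬ r ≠ p (i+1)} = {p (i+1)} := by ext r; simp
          rw [hset]
          exact measure_singleton _
        filter_upwards [hne] with r hr hrI
        have hrI' : r ∈ Ioc (p i) (p (i+1)) := by
          rwa [Set.uIoc_of_le hpii] at hrI
        have hr0 : 0 ≤ r := hpi.trans hrI'.1.le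
        have hrlt : r < p (i+1) := lt_of_le_of_ne hrI'.2 hr
        have hfl : ⌊r / (t/n)⌋₊ = i := by
          rw [Nat.floor_eq_iff (div_nonneg hr0 hδ.le)]
          constructor
          · rw [le_div_iff₀ hδ]
            simpa [hp] using hrI'.1.le
          · rw [div_lt_iff₀ hδ]
            have : r < ((i:ℝ)+1) * (t/n) := by
              have := hrlt
              simp only [hp] at this
              push_cast at this
              linarith
            linarith
        have hνr : ν n r = p i := by simp only [hν, hfl, hp]
        rw [hνr]
      calc Real.log (u (p (i+1))) - Real.log (u (p i))
          ≤ (u (p (i+1)) - u (p i)) / u (p i) := h1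
        _ = ∫ r in p i..p (i+1), h r / u (p i) := h2
        _ = ∫ r in p i..p (i+1), h r / u (ν n r) := h3
    have tel : Real.log (u t) - Real.log c
        = ∑ i ∈ Finset.range n, (Real.log (u (p (i+1))) - Real.log (u (p i))) := by
      rw [Finset.sum_range_sub (fun i => Real.log (u (p i))), hp0, hpn, hu0]
    have hsum : ∑ i ∈ Finset.range n, (Real.log (u (p (i+1))) - Real.log (u (p i)))
        ≤ ∑ i ∈ Finset.range n, ∫ r in p i..p (i+1), h r / u (ν n r) :=
      Finset.sum_le_sum fun i _ => key_i i
    have hadj : ∑ i ∈ Finset.range n, ∫ r in p i..p (i+1), h r / u (ν n r)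
        = ∫ r in (p 0)..(p n), h r / u (ν n r) :=
      intervalIntegral.sum_integral_adjacent_intervals fun k _ => (hG_int n).intervalIntegrable
    rw [hp0, hpn] at hadj
    rw [tel, ← hadj]
    exact hsum
  have hIoo : ∀ n : ℕ, (∫ r in (0:ℝ)..t, h r / u (ν n r))
      = ∫ r in Ioo (0:ℝ) t, h r / u (ν n r) := by
    intro n
    rw [intervalIntegral.integral_of_le ht.le, integral_Ioc_eq_integral_Ioo]
  have stepB : Tendsto (fun n : ℕ => ∫ r in Ioo (0:ℝ) t, h r / u (ν n r)) atTop
      (𝓝 (∫ r in Ioo (0:ℝ) t, h r / u r)) := by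
    apply tendsto_integral_of_dominated_convergence (fun r => |h r|)
    · exact fun n => (hG_meas n).restrict
    · exact hh_int.abs.integrableOn
    · exact fun n => ae_of_all _ (hG_bd n)
    · filter_upwards [ae_restrict_mem measurableSet_Ioo] with r hr
      have hν_tend : Tendsto (fun n : ℕ => ν n r) atTop (𝓝 r) := by
        apply tendsto_of_tendsto_of_tendsto_of_le_of_le'
          (g := fun n : ℕ => r - t/n) (h := fun _ : ℕ => r)
        · have h0 : Tendsto (fun n : ℕ => t / (n:ℝ)) atTop (𝓝 0) :=
            tendsto_const_div_atTop_nhds_zero_nat t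
          simpa using tendsto_const_nhds.sub h0
        · exact tendsto_const_nhds
        · filter_upwards [eventually_ge_atTop 1] with n hn
          have hnR : (0:ℝ) < n := by exact_mod_cast hn
          have hδ : 0 < t / n := div_pos ht hnR
          have hfl := Nat.sub_one_lt_floor (r / (t/n))
          have h2 : (r / (t/n) - 1) * (t/n) ≤ (⌊r / (t/n)⌋₊ : ℝ) * (t/n) :=
            mul_le_mul_of_nonneg_right hfl.le hδ.le
          have h3 : (r / (t/n) - 1) * (t/n) = r - t/n := by field_simp
          simp only [hν]
          linarith
        · exact Filter.Eventually.of_forall fun n => hν_le n r hr.1.le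
      have hmem : ∀ n, ν n r ∈ Icc (0:ℝ) t := fun n =>
        ⟨hν_nonneg n r, (hν_le n r hr.1.le).trans hr.2.le⟩
      have hcw : ContinuousWithinAt u (Icc 0 t) r := hu_cont r ⟨hr.1.le, hr.2.le⟩
      have hu_tend : Tendsto (fun n : ℕ => u (ν n r)) atTop (𝓝 (u r)) :=
        (hcw.tendsto).comp (tendsto_nhdsWithin_iff.2 ⟨hν_tend, Filter.Eventually.of_forall hmem⟩)
      exact tendsto_const_nhds.div hu_tend (ne_of_gt (hu_pos r))
  have final : Real.log (u t) - Real.log c ≤ ∫ r in Ioo (0:ℝ) t, h r / u r := by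
    apply ge_of_tendsto stepB
    filter_upwards [eventually_ge_atTop 1] with n hn
    have h4 := stepA n hn
    rwa [hIoo n] at h4
  linarith

theorem log_gronwall_inequality
    (T K : ℝ) (hT : 0 < T) (hK : 0 < K)
    (α β A B A' : ℝ → ℝ)
    (hα_nonneg : ∀ t ∈ Ioo (0:ℝ) T, 0 ≤ α t)
    (hβ_nonneg : ∀ t ∈ Ioo (0:ℝ) T, 0 ≤ β t)
    (hα_int : IntegrableOn α (Ioo 0 T))
    (hβ_int : IntegrableOn β (Ioo 0 T))
    (hA_ge_one : ∀ t ∈ Ico (0:ℝ) T, 1 ≤ A t)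
    (hB_pos : ∀ t ∈ Ioo (0:ℝ) T, 0 < B t)
    (hA_int : IntegrableOn A (Ioo 0 T))
    (hB_int : IntegrableOn B (Ioo 0 T))
    (hA_cont : ContinuousOn A (Ico 0 T))
    (hA'_int : IntegrableOn A' (Ioo 0 T))
    (hA_deriv : ∀ᵐ t ∂(volume.restrict (Ioo (0:ℝ) T)), HasDerivAt A (A' t) t)
    (hFTC : ∀ t ∈ Ico (0:ℝ) T, A t = A 0 + ∫ s in Ioo (0:ℝ) t, A' s)
    (hineq : ∀ᵐ t ∂(volume.restrict (Ioo (0:ℝ) T)),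
      A' t + B t ≤ K * (α t + Real.log (B t)) * A t + β t) :
    ∀ t ∈ Ico (0:ℝ) T,
      (⨆ s : Icc (0:ℝ) t, A s.1) + (∫ s in Ioo (0:ℝ) t, B s)
        ≤ (2 * ((Real.log (A 0) + K * (∫ s in Ioo (0:ℝ) t, α s)
                  + (∫ s in Ioo (0:ℝ) t, β s) + 2 * K ^ 2 * t) * Real.exp (K * t)) + 1)
            * Real.exp ((Real.log (A 0) + K * (∫ s in Ioo (0:ℝ) t, α s)
                  + (∫ s in Ioo (0:ℝ) t, β s) + 2 * K ^ 2 * t) * Real.exp (K * t)) := by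
  intro t₀ ht₀
  obtain ⟨ht₀0, ht₀T⟩ := ht₀
  have hsubT : Ioo (0:ℝ) t₀ ⊆ Ioo 0 T := Ioo_subset_Ioo_right ht₀T.le
  have hIccsub : Icc (0:ℝ) t₀ ⊆ Ico 0 T := fun s hs => ⟨hs.1, lt_of_le_of_lt hs.2 ht₀T⟩
  have hA0 : 1 ≤ A 0 := hA_ge_one 0 ⟨le_refl 0, hT⟩
  have hAc : ContinuousOn A (Icc 0 t₀) := hA_cont.mono hIccsub
  have hA_one : ∀ s ∈ Icc (0:ℝ) t₀, 1 ≤ A s := fun s hs => hA_ge_one s (hIccsub hs)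
  -- the auxiliary function h
  set h0 : ℝ → ℝ := fun s => (K * α s + 2*K^2) * A s + β s + K * A s * Real.log (A s) with hh0
  set h : ℝ → ℝ := fun s => Set.indicator (Ioo 0 t₀) h0 s with hhdef
  -- integrability of h0 on Ioo 0 t₀
  have hαt : IntegrableOn α (Ioo 0 t₀) := hα_int.mono_set hsubT
  have hβt : IntegrableOn β (Ioo 0 t₀) := hβ_int.mono_set hsubT
  have hBt : IntegrableOn B (Ioo 0 t₀) := hB_int.mono_set hsubT
  have hA't : IntegrableOn A' (Ioo 0 t₀) := hA'_int.mono_set hsubT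
  have hμfin : volume (Ioo (0:ℝ) t₀) < ⊤ := measure_Ioo_lt_top
  have hconst_int : ∀ c : ℝ, IntegrableOn (fun _ => c) (Ioo (0:ℝ) t₀) :=
    fun c => integrableOn_const hμfin.ne
  obtain ⟨M, hM⟩ : ∃ M, ∀ x ∈ Icc (0:ℝ) t₀, ‖A x‖ ≤ M :=
    isCompact_Icc.exists_bound_of_continuousOn hAc
  have hA_meas : AEStronglyMeasurable A (volume.restrict (Ioo (0:ℝ) t₀)) :=
    (hA_int.mono_set hsubT).aestronglyMeasurable
  have hA_bd : ∀ᵐ s ∂(volume.restrict (Ioo (0:ℝ) t₀)), ‖A s‖ ≤ M := by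
    filter_upwards [ae_restrict_mem measurableSet_Ioo] with s hs
    exact hM s ⟨hs.1.le, hs.2.le⟩
  have hterm1 : IntegrableOn (fun s => (K * α s + 2*K^2) * A s) (Ioo (0:ℝ) t₀) := by
    have hg : IntegrableOn (fun s => K * α s + 2*K^2) (Ioo (0:ℝ) t₀) :=
      (hαt.const_mul K).add (hconst_int _)
    have := Integrable.bdd_mul (c := M) hg hA_meas hA_bd
    exact this.congr (ae_of_all _ fun s => mul_comm _ _)
  have hterm3 : IntegrableOn (fun s => K * A s * Real.log (A s)) (Ioo (0:ℝ) t₀) := by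
    have hcont : ContinuousOn (fun s => K * A s * Real.log (A s)) (Icc 0 t₀) := by
      have hlog : ContinuousOn (fun s => Real.log (A s)) (Icc 0 t₀) :=
        hAc.log fun x hx => ne_of_gt (lt_of_lt_of_le one_pos (hA_one x hx))
      exact ((continuousOn_const.mul hAc).mul hlog)
    exact (hcont.integrableOn_Icc).mono_set Ioo_subset_Icc_self
  have hh0_int : IntegrableOn h0 (Ioo (0:ℝ) t₀) := (hterm1.add hβt).add hterm3
  have hh_int : Integrable h := by
    rw [hhdef]
    exact (integrable_indicator_iff measurableSet_Ioo).2 hh0_int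
  have hh0_nonneg : ∀ s ∈ Ioo (0:ℝ) t₀, 0 ≤ h0 s := by
    intro s hs
    have h1 : 1 ≤ A s := hA_one s ⟨hs.1.le, hs.2.le⟩
    have h2 : 0 ≤ α s := hα_nonneg s (hsubT hs)
    have h3 : 0 ≤ β s := hβ_nonneg s (hsubT hs)
    have h4 : 0 ≤ Real.log (A s) := Real.log_nonneg h1
    have h5 : (0:ℝ) ≤ A s := le_trans zero_le_one h1
    rw [hh0]
    have : 0 ≤ (K * α s + 2*K^2) * A s := by positivity
    have : 0 ≤ K * A s * Real.log (A s) := by positivity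
    dsimp only
    positivity
  have hh_nonneg : ∀ s, 0 ≤ h s := by
    intro s
    rw [hhdef]
    exact Set.indicator_nonneg (fun x hx => hh0_nonneg x hx) s
  -- the function u
  set u : ℝ → ℝ := fun r => A 0 + ∫ s in Ioo (0:ℝ) r, h s with hudef
  have hu_eq : ∀ r : ℝ, u r = A 0 + ∫ s in Ioo (0:ℝ) r, h s := fun r => rfl
  have hu_mono : Monotone u := by
    intro r r' hrr'
    have := setIntegral_mono_set (s := Ioo (0:ℝ) r) (t := Ioo (0:ℝ) r') hh_int.integrableOn
      (ae_of_all _ hh_nonneg) (HasSubset.Subset.eventuallyLE (Ioo_subset_Ioo_right hrr'))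
    simp only [hudef]
    linarith
  have hu_ge : ∀ r, A 0 ≤ u r := by
    intro r
    have h0' : (0:ℝ) ≤ ∫ s in Ioo (0:ℝ) r, h s :=
      setIntegral_nonneg measurableSet_Ioo (fun x _ => hh_nonneg x)
    simp only [hudef]
    linarith
  have hu_one : ∀ r, 1 ≤ u r := fun r => le_trans hA0 (hu_ge r)
  have hu_pos : ∀ r, 0 < u r := fun r => lt_of_lt_of_le one_pos (hu_one r)
  have hu_meas : Measurable u := hu_mono.measurable
  have hu0 : u 0 = A 0 := by simp [hudef]
  have hu_cont : ContinuousOn u (Icc 0 t₀) := by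
    have hcont : Continuous fun r => A 0 + ∫ s in (0:ℝ)..r, h s :=
      continuous_const.add (hh_int.continuous_primitive 0)
    apply (hcont.continuousOn (s := Icc 0 t₀)).congr
    intro r hr
    dsimp only
    rw [hu_eq, intervalIntegral.integral_of_le hr.1, integral_Ioc_eq_integral_Ioo]
  -- pointwise a.e. inequality A' ≤ h - B/2
  have hA'B : ∀ᵐ s ∂(volume.restrict (Ioo (0:ℝ) t₀)), A' s ≤ h s - B s / 2 := by
    have h1 := ae_restrict_of_ae_restrict_of_subset hsubT hineq
    filter_upwards [h1, ae_restrict_mem measurableSet_Ioo] with s hs hmem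
    have hBs : 0 < B s := hB_pos s (hsubT hmem)
    have hAs : 1 ≤ A s := hA_one s ⟨hmem.1.le, hmem.2.le⟩
    have hAs0 : 0 < A s := lt_of_lt_of_le one_pos hAs
    have h2KA : 0 < 2*K*A s := by positivity
    have hBrw : (B s/(2*K*A s)) * (2*K) * (A s) = B s := by field_simp
    have hsplit : Real.log (B s)
        = Real.log (B s / (2*K*A s)) + Real.log (2*K) + Real.log (A s) := by
      conv_lhs => rw [← hBrw]
      rw [Real.log_mul (mul_ne_zero (ne_of_gt (div_pos hBs h2KA)) (by positivity))
        (ne_of_gt hAs0), Real.log_mul (ne_of_gt (div_pos hBs h2KA)) (by positivity)]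
    have hlog1 : Real.log (B s / (2*K*A s)) ≤ B s / (2*K*A s) - 1 :=
      Real.log_le_sub_one_of_pos (div_pos hBs h2KA)
    have hlog2 : Real.log (2*K) ≤ 2*K - 1 := Real.log_le_sub_one_of_pos (by positivity)
    have e1 : K * A s * Real.log (B s / (2*K*A s)) ≤ K * A s * (B s/(2*K*A s) - 1) :=
      mul_le_mul_of_nonneg_left hlog1 (by positivity)
    have e2 : K * A s * Real.log (2*K) ≤ K * A s * (2*K - 1) :=
      mul_le_mul_of_nonneg_left hlog2 (by positivity)
    have e3 : K * A s * (B s/(2*K*A s)) = B s / 2 := by field_simp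
    have e4 : (0:ℝ) ≤ K * A s := by positivity
    have hhs : h s = h0 s := Set.indicator_of_mem hmem _
    rw [hsplit] at hs
    rw [hhs, hh0]
    dsimp only
    nlinarith [hs, e1, e2, e3, e4]
  -- the comparison A + (1/2)∫B ≤ u
  have step3 : ∀ r ∈ Icc (0:ℝ) t₀, A r + (∫ s in Ioo (0:ℝ) r, B s) / 2 ≤ u r := by
    intro r hr
    have hFTCr := hFTC r (hIccsub hr)
    have hsub_r : Ioo (0:ℝ) r ⊆ Ioo 0 t₀ := Ioo_subset_Ioo_right hr.2
    have hBr : IntegrableOn B (Ioo (0:ℝ) r) := hBt.mono_set hsub_r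
    have hmono2 : (∫ s in Ioo (0:ℝ) r, A' s) ≤ ∫ s in Ioo (0:ℝ) r, (h s - B s / 2) := by
      apply setIntegral_mono_ae_restrict (hA't.mono_set hsub_r)
        (hh_int.integrableOn.sub (hBr.div_const 2))
      exact ae_restrict_of_ae_restrict_of_subset hsub_r hA'B
    rw [integral_sub hh_int.integrableOn (hBr.div_const 2), integral_div] at hmono2
    rw [hu_eq]
    linarith [hFTCr, hmono2]
  have hAu : ∀ r ∈ Icc (0:ℝ) t₀, A r ≤ u r := by
    intro r hr
    have hBnn : 0 ≤ ∫ s in Ioo (0:ℝ) r, B s := setIntegral_nonneg measurableSet_Ioo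
      (fun x hx => (hB_pos x (hsubT (Ioo_subset_Ioo_right hr.2 hx))).le)
    have hs3 := step3 r hr
    calc A r ≤ A r + (∫ s in Ioo (0:ℝ) r, B s) / 2 := by linarith
      _ ≤ u r := hs3
  -- the Gronwall setup
  set ψ : ℝ → ℝ := fun r => Real.log (u r) with hψdef
  set g : ℝ → ℝ := fun s => K * α s + β s + 2*K^2 with hgdef
  set a : ℝ → ℝ := fun r => Real.log (A 0) + ∫ s in Ioo (0:ℝ) r, g s with hadef
  have hg_int : IntegrableOn g (Ioo (0:ℝ) t₀) := ((hαt.const_mul K).add hβt).add (hconst_int _)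
  have hg_nonneg : ∀ s ∈ Ioo (0:ℝ) t₀, 0 ≤ g s := by
    intro s hs
    have h1 := hα_nonneg s (hsubT hs)
    have h2 := hβ_nonneg s (hsubT hs)
    rw [hgdef]; dsimp only; positivity
  have hψ_nonneg : ∀ r, 0 ≤ ψ r := fun r => Real.log_nonneg (hu_one r)
  have hψ_mono : Monotone ψ := fun r r' hrr' => Real.log_le_log (hu_pos r) (hu_mono hrr')
  have hψ_meas : AEStronglyMeasurable ψ (volume.restrict (Ioo (0:ℝ) t₀)) :=
    (Real.measurable_log.comp hu_meas).aestronglyMeasurable.restrict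
  have hψ_bd : ∀ r ∈ Icc (0:ℝ) t₀, ψ r ≤ ψ t₀ := fun r hr => hψ_mono hr.2
  have hψ_int : IntegrableOn ψ (Ioo (0:ℝ) t₀) := by
    apply Integrable.mono' (hconst_int (ψ t₀)) hψ_meas
    filter_upwards [ae_restrict_mem measurableSet_Ioo] with s hs
    rw [Real.norm_eq_abs, abs_of_nonneg (hψ_nonneg s)]
    exact hψ_bd s ⟨hs.1.le, hs.2.le⟩
  have ha_mono : MonotoneOn a (Icc 0 t₀) := by
    intro r hr r' hr' hrr'
    have := setIntegral_mono_set (s := Ioo (0:ℝ) r) (t := Ioo (0:ℝ) r')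
      (hg_int.mono_set (Ioo_subset_Ioo_right hr'.2))
      (by filter_upwards [ae_restrict_mem measurableSet_Ioo] with x hx
          exact hg_nonneg x (Ioo_subset_Ioo_right hr'.2 hx))
      (HasSubset.Subset.eventuallyLE (Ioo_subset_Ioo_right hrr'))
    simp only [hadef]
    linarith
  have ha_nonneg : ∀ r ∈ Icc (0:ℝ) t₀, 0 ≤ a r := by
    intro r hr
    have h1 : 0 ≤ ∫ s in Ioo (0:ℝ) r, g s := setIntegral_nonneg measurableSet_Ioo
      (fun x hx => hg_nonneg x (Ioo_subset_Ioo_right hr.2 hx))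
    have h2 : 0 ≤ Real.log (A 0) := Real.log_nonneg hA0
    simp only [hadef]
    linarith
  -- the main integral inequality for ψ
  have hmain : ∀ r ∈ Icc (0:ℝ) t₀, ψ r ≤ a r + K * ∫ s in Ioo (0:ℝ) r, ψ s := by
    intro r hr
    rcases eq_or_lt_of_le hr.1 with hr0 | hr0
    · rw [← hr0]
      simp [hψdef, hadef, hu0]
    · have hlog := my_log_le hA0 hr0 hh_int hh_nonneg hu_eq
        (hu_cont.mono (Icc_subset_Icc_right hr.2))
      have hsub_r : Ioo (0:ℝ) r ⊆ Ioo 0 t₀ := Ioo_subset_Ioo_right hr.2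
      have hhu_int : IntegrableOn (fun s => h s / u s) (Ioo (0:ℝ) r) := by
        apply Integrable.mono' (hh_int.abs.integrableOn)
          ((hh_int.aemeasurable.div hu_meas.aemeasurable).aestronglyMeasurable.restrict)
        refine ae_of_all _ fun s => ?_
        rw [Real.norm_eq_abs, Pi.div_apply, abs_div, abs_of_pos (hu_pos s)]
        exact div_le_self (abs_nonneg _) (hu_one s)
      have hgψ_int : IntegrableOn (fun s => g s + K * ψ s) (Ioo (0:ℝ) r) :=
        (hg_int.mono_set hsub_r).add ((hψ_int.mono_set hsub_r).const_mul K)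
      have hptwise : ∀ s ∈ Ioo (0:ℝ) r, h s / u s ≤ g s + K * ψ s := by
        intro s hs
        have hs' : s ∈ Ioo (0:ℝ) t₀ := hsub_r hs
        have hhs : h s = h0 s := Set.indicator_of_mem hs' _
        have hAs1 : 1 ≤ A s := hA_one s ⟨hs'.1.le, hs'.2.le⟩
        have hAsu : A s ≤ u s := hAu s ⟨hs'.1.le, hs'.2.le⟩
        have hlogAu : Real.log (A s) ≤ Real.log (u s) :=
          Real.log_le_log (lt_of_lt_of_le one_pos hAs1) hAsu
        have hlogA0 : 0 ≤ Real.log (A s) := Real.log_nonneg hAs1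
        have hαs : 0 ≤ α s := hα_nonneg s (hsubT hs')
        have hβs : 0 ≤ β s := hβ_nonneg s (hsubT hs')
        rw [div_le_iff₀ (hu_pos s), hhs, hh0, hgdef, hψdef]
        dsimp only
        have p1 : (K*α s + 2*K^2) * A s ≤ (K*α s + 2*K^2) * u s :=
          mul_le_mul_of_nonneg_left hAsu (by positivity)
        have p2 : β s ≤ β s * u s := le_mul_of_one_le_right hβs (hu_one s)
        have p3 : A s * Real.log (A s) ≤ u s * Real.log (u s) :=
          mul_le_mul hAsu hlogAu hlogA0 (le_trans zero_le_one (hu_one s))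
        nlinarith [p1, p2, p3, hK.le]
      have hint_le : (∫ s in Ioo (0:ℝ) r, h s / u s)
          ≤ ∫ s in Ioo (0:ℝ) r, (g s + K * ψ s) :=
        setIntegral_mono_on hhu_int hgψ_int measurableSet_Ioo hptwise
      have hsplit2 : (∫ s in Ioo (0:ℝ) r, (g s + K * ψ s))
          = (∫ s in Ioo (0:ℝ) r, g s) + K * ∫ s in Ioo (0:ℝ) r, ψ s := by
        rw [integral_add (hg_int.mono_set hsub_r) ((hψ_int.mono_set hsub_r).const_mul K),
          integral_const_mul]
      have hψr : ψ r = Real.log (u r) := rfl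
      have har : a r = Real.log (A 0) + ∫ s in Ioo (0:ℝ) r, g s := rfl
      rw [hψr, har]
      linarith [hlog, hint_le, hsplit2.le, hsplit2.ge]
  clear_value ψ g a u h h0
  -- apply the Gronwall lemma
  have ht₀mem : t₀ ∈ Icc (0:ℝ) t₀ := right_mem_Icc.2 ht₀0
  have hgron := my_integral_gronwall hK.le hψ_int hψ_bd ha_mono ha_nonneg hmain t₀ ht₀mem
  have hu_le : u t₀ ≤ Real.exp (a t₀ * Real.exp (K * t₀)) := by
    have hψt : Real.log (u t₀) ≤ a t₀ * Real.exp (K * t₀) := by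
      rw [← congrFun hψdef t₀]
      exact hgron
    rw [← Real.exp_log (hu_pos t₀)]
    exact Real.exp_le_exp.2 hψt
  -- compute a t₀
  have ha_val : a t₀ = Real.log (A 0) + K * (∫ s in Ioo (0:ℝ) t₀, α s)
      + (∫ s in Ioo (0:ℝ) t₀, β s) + 2 * K ^ 2 * t₀ := by
    have h1 : (∫ s in Ioo (0:ℝ) t₀, g s)
        = K * (∫ s in Ioo (0:ℝ) t₀, α s) + (∫ s in Ioo (0:ℝ) t₀, β s) + 2*K^2*t₀ := by
      have i2 : IntegrableOn (fun s => K * α s) (Ioo (0:ℝ) t₀) := hαt.const_mul K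
      have i1 : IntegrableOn (fun s => K * α s + β s) (Ioo (0:ℝ) t₀) := i2.add hβt
      rw [hgdef]
      dsimp only
      rw [integral_add i1 (hconst_int _), integral_add i2 hβt, integral_const_mul,
        setIntegral_const]
      simp [Real.volume_Ioo, ENNReal.toReal_ofReal ht₀0, max_eq_left ht₀0]
      ring
    have har : a t₀ = Real.log (A 0) + ∫ s in Ioo (0:ℝ) t₀, g s := congrFun hadef t₀
    rw [har, h1]
    ring
  rw [show Real.log (A 0) + K * (∫ s in Ioo (0:ℝ) t₀, α s)
      + (∫ s in Ioo (0:ℝ) t₀, β s) + 2 * K ^ 2 * t₀ = a t₀ from ha_val.symm]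
  set Q := a t₀ * Real.exp (K * t₀) with hQdef
  have hQ0 : 0 ≤ Q := mul_nonneg (ha_nonneg t₀ ht₀mem) (Real.exp_pos _).le
  clear_value Q
  have hsup : (⨆ s : Icc (0:ℝ) t₀, A s.1) ≤ Real.exp Q := by
    haveI : Nonempty (Icc (0:ℝ) t₀) := ⟨⟨0, left_mem_Icc.2 ht₀0⟩⟩
    apply ciSup_le
    intro s
    exact le_trans (hAu s.1 s.2) (le_trans (hu_mono s.2.2) hu_le)
  have hBle : (∫ s in Ioo (0:ℝ) t₀, B s) ≤ 2 * (Real.exp Q - 1) := by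
    have h1 : A t₀ + (∫ s in Ioo (0:ℝ) t₀, B s) / 2 ≤ u t₀ := step3 t₀ ht₀mem
    have h2 : 1 ≤ A t₀ := hA_one t₀ ht₀mem
    have h3 : u t₀ ≤ Real.exp Q := hu_le
    linarith
  have hexp : (1 - Q) * Real.exp Q ≤ 1 := by
    have h1 : -Q + 1 ≤ Real.exp (-Q) := Real.add_one_le_exp (-Q)
    have h2 : Real.exp (-Q) * Real.exp Q = 1 := by rw [← Real.exp_add]; simp
    nlinarith [Real.exp_pos Q]
  calc (⨆ s : Icc (0:ℝ) t₀, A s.1) + (∫ s in Ioo (0:ℝ) t₀, B s)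
      ≤ Real.exp Q + 2 * (Real.exp Q - 1) := add_le_add hsup hBle
    _ ≤ (2 * Q + 1) * Real.exp Q := by nlinarith [hexp, Real.exp_pos Q]
end

section
/- Let T > 0 and K > 0 be constants. Let α and β be nonnegative functions in L¹((0,T)). Let A and B be integrable functions on (0,T) with A(t) ≥ 1 and B(t) > 0 for all t, such that A is absolutely continuous on (0,T) and continuous on [0,T), and suppose that for (almost every) t ∈ (0,T) one has A'(t) + B(t) ≤ K(α(t) + log B(t))·A(t) + β(t). Then for (almost every) t ∈ (0,T), (d/dt)(log A(t)) + B(t)/(2A(t)) ≤ K·log A(t) + K·α(t) + β(t) + 2K². -/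
/-!
First key step in the proof of the logarithmic Gronwall inequality (Lemma 2.2 of Li--Titi):
dividing the differential inequality by `A(t) ≥ 1` and using `log τ ≤ 2√τ` together with
Young's inequality yields `(log A)' + B/(2A) ≤ K log A + K α + β + 2K²` a.e. on `(0,T)`.
Since `A` has a.e. derivative `A'`, the a.e. derivative of `log A` is `A'/A`.
-/

open MeasureTheory Set

theorem log_gronwall_first_step
    (T K : ℝ) (hT : 0 < T) (hK : 0 < K)
    (α β A B A' : ℝ → ℝ)
    (hα_nonneg : ∀ t ∈ Ioo (0:ℝ) T, 0 ≤ α t)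
    (hβ_nonneg : ∀ t ∈ Ioo (0:ℝ) T, 0 ≤ β t)
    (hα_int : IntegrableOn α (Ioo 0 T))
    (hβ_int : IntegrableOn β (Ioo 0 T))
    (hA_ge_one : ∀ t ∈ Ico (0:ℝ) T, 1 ≤ A t)
    (hB_pos : ∀ t ∈ Ioo (0:ℝ) T, 0 < B t)
    (hA_int : IntegrableOn A (Ioo 0 T))
    (hB_int : IntegrableOn B (Ioo 0 T))
    (hA_cont : ContinuousOn A (Ico 0 T))
    (hA'_int : IntegrableOn A' (Ioo 0 T))
    (hA_deriv : ∀ᵐ t ∂(volume.restrict (Ioo (0:ℝ) T)), HasDerivAt A (A' t) t)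
    (hFTC : ∀ t ∈ Ico (0:ℝ) T, A t = A 0 + ∫ s in Ioo (0:ℝ) t, A' s)
    (hineq : ∀ᵐ t ∂(volume.restrict (Ioo (0:ℝ) T)),
      A' t + B t ≤ K * (α t + Real.log (B t)) * A t + β t) :
    ∀ᵐ t ∂(volume.restrict (Ioo (0:ℝ) T)),
      HasDerivAt (fun s => Real.log (A s)) (A' t / A t) t ∧
      A' t / A t + B t / (2 * A t)
        ≤ K * Real.log (A t) + K * α t + β t + 2 * K ^ 2 := by
  filter_upwards [hA_deriv, hineq, ae_restrict_mem measurableSet_Ioo] with t hd hi ht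
  have hA1 : 1 ≤ A t := hA_ge_one t ⟨ht.1.le, ht.2⟩
  have hA0 : 0 < A t := lt_of_lt_of_le one_pos hA1
  have hB : 0 < B t := hB_pos t ht
  have hα : 0 ≤ α t := hα_nonneg t ht
  have hβ : 0 ≤ β t := hβ_nonneg t ht
  refine ⟨hd.log hA0.ne', ?_⟩
  set a := A t
  set b := B t
  have hba : 0 < b / a := div_pos hB hA0
  have hsqrt := Real.sq_sqrt hba.le
  have hlog : Real.log (b / a) ≤ 2 * Real.sqrt (b / a) := by
    have h1 := Real.log_le_sub_one_of_pos (Real.sqrt_pos.mpr hba)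
    have h2 := Real.log_sqrt hba.le
    linarith [Real.sqrt_nonneg (b / a)]
  have hkey : K * Real.log (b / a) ≤ b / a / 2 + 2 * K ^ 2 := by
    have hy : 2 * K * Real.sqrt (b / a) ≤ b / a / 2 + 2 * K ^ 2 := by
      nlinarith [sq_nonneg (Real.sqrt (b / a) - 2 * K)]
    have : K * Real.log (b / a) ≤ K * (2 * Real.sqrt (b / a)) :=
      mul_le_mul_of_nonneg_left hlog hK.le
    linarith
  have hsplit : Real.log (b / a) = Real.log b - Real.log a :=
    Real.log_div hB.ne' hA0.ne'
  have h1 : (A' t + b) / a ≤ K * α t + K * Real.log b + β t := by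
    rw [div_le_iff₀ hA0]
    nlinarith [hi]
  have h2 : (A' t + b) / a = A' t / a + b / a := add_div _ _ _
  have h3 : b / a = 2 * (b / (2 * a)) := by field_simp
  have h4 : b / a / 2 = b / (2 * a) := by ring
  have hKlog : K * Real.log b = K * Real.log (b / a) + K * Real.log a := by
    rw [hsplit]; ring
  linarith
end

section
/- Let T > 0 and K > 0 be constants. Let α and β be nonnegative functions in L¹((0,T)). Let A and B be integrable functions on (0,T) with A(t) ≥ 1 and B(t) > 0 for all t, such that A is absolutely continuous on (0,T) and continuous on [0,T), and suppose that for (almost every) t ∈ (0,T) one has A'(t) + B(t) ≤ K(α(t) + log B(t))·A(t) + β(t). Then for all t ∈ [0,T), log A(t) + ∫₀ᵗ B(s)/(2A(s)) ds ≤ Q(t), where Q(t) = (log A(0) + K·∫₀ᵗ α(s) ds + ∫₀ᵗ β(s) ds + 2K²t)·e^{Kt}. In particular, A(t) ≤ e^{Q(t)} and ∫₀ᵗ B(s)/A(s) ds ≤ 2Q(t) for all t ∈ [0,T). -/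
/-!
Intermediate conclusion in the proof of the logarithmic Gronwall inequality (Lemma 2.2 of
Li--Titi): applying the classical Gronwall inequality to
`(log A)' + B/(2A) ≤ K log A + K α + β + 2K²` gives
`log A(t) + ∫₀ᵗ B/(2A) ≤ Q(t)`, hence `A(t) ≤ e^{Q(t)}` and `∫₀ᵗ B/A ≤ 2Q(t)`, where
`Q(t) = (log A(0) + K‖α‖_{L¹(0,t)} + ‖β‖_{L¹(0,t)} + 2K²t) e^{Kt}`.
-/

open MeasureTheory Set

lemma abs_log_sub_log_le {x y : ℝ} (hx : 1/2 ≤ x) (hy : 1/2 ≤ y) :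
    |Real.log x - Real.log y| ≤ 2 * |x - y| := by
  have key : ∀ u v : ℝ, 1/2 ≤ u → 1/2 ≤ v → v ≤ u → Real.log u - Real.log v ≤ 2 * (u - v) := by
    intro u v hu hv huv
    have hv0 : 0 < v := by linarith
    have hu0 : 0 < u := by linarith
    have h1 : Real.log (u / v) ≤ u / v - 1 := Real.log_le_sub_one_of_pos (by positivity)
    rw [Real.log_div hu0.ne' hv0.ne'] at h1
    have h2 : u / v - 1 = (u - v) / v := by field_simp
    rw [h2] at h1
    have h3 : (u - v) / v ≤ 2 * (u - v) := by
      rw [div_le_iff₀ hv0]; nlinarith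
    linarith
  rcases le_total y x with h | h
  · have h0 : 0 ≤ Real.log x - Real.log y := by
      have := Real.log_le_log (by linarith : (0:ℝ) < y) h
      linarith
    rw [abs_of_nonneg h0, abs_of_nonneg (by linarith : (0:ℝ) ≤ x - y)]
    exact key x y hx hy h
  · have h0 : Real.log x - Real.log y ≤ 0 := by
      have := Real.log_le_log (by linarith : (0:ℝ) < x) h
      linarith
    rw [abs_of_nonpos h0, abs_of_nonpos (by linarith : x - y ≤ 0)]
    have := key y x hy hx h
    linarith

lemma logFTC {T : ℝ} {A A' : ℝ → ℝ}
    (hA1 : ∀ u ∈ Ico (0:ℝ) T, 1 ≤ A u)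
    (hA_meas : AEStronglyMeasurable A (volume.restrict (Ioo 0 T)))
    (hA'_int : IntegrableOn A' (Ioo 0 T))
    (hFTC : ∀ u ∈ Ico (0:ℝ) T, A u = A 0 + ∫ s in Ioo (0:ℝ) u, A' s) :
    ∀ t ∈ Ico (0:ℝ) T, Real.log (A t) = Real.log (A 0) + ∫ s in Ioo (0:ℝ) t, A' s / A s := by
  rintro t ⟨ht0, htT⟩
  have hsubT : Ioo (0:ℝ) t ⊆ Ioo 0 T := Ioo_subset_Ioo le_rfl htT.le
  have hIccT : Icc (0:ℝ) t ⊆ Ico 0 T := fun u hu => ⟨hu.1, lt_of_le_of_lt hu.2 htT⟩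
  have hA'At : IntegrableOn (fun s => A' s / A s) (Ioo 0 t) := by
    apply Integrable.mono (hA'_int.mono_set hsubT)
      (((hA'_int.mono_set hsubT).aestronglyMeasurable.aemeasurable.div
        (hA_meas.mono_measure (Measure.restrict_mono hsubT le_rfl)).aemeasurable).aestronglyMeasurable)
    filter_upwards [ae_restrict_mem measurableSet_Ioo] with s hs
    have h1 : 1 ≤ A s := hA1 s ⟨hs.1.le, hs.2.trans htT⟩
    rw [Real.norm_eq_abs, Real.norm_eq_abs]; simp only [Pi.div_apply]; rw [abs_div, abs_of_pos (lt_of_lt_of_le one_pos h1)]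
    exact div_le_self (abs_nonneg _) h1
  have key : ∀ ε > 0,
      |Real.log (A t) - (Real.log (A 0) + ∫ s in Ioo (0:ℝ) t, A' s / A s)| ≤ ε := by
    intro ε hε
    set C := ∫ s in Ioo (0:ℝ) T, |A' s| with hC
    have hC0 : 0 ≤ C := setIntegral_nonneg measurableSet_Ioo (fun s _ => abs_nonneg _)
    set δ := min (1/2) (ε / (4 + 2 * C)) with hδ
    have hδpos : 0 < δ := lt_min (by norm_num) (by positivity)
    have hδhalf : δ ≤ 1/2 := min_le_left _ _
    have hδε : (4 + 2 * C) * δ ≤ ε := by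
      have h1 : δ ≤ ε / (4 + 2 * C) := min_le_right _ _
      have h2 : (0:ℝ) < 4 + 2 * C := by linarith
      calc (4 + 2 * C) * δ ≤ (4 + 2 * C) * (ε / (4 + 2 * C)) :=
            mul_le_mul_of_nonneg_left h1 h2.le
        _ = ε := by field_simp
    clear_value C
    clear_value δ
    have hA'abs_int : IntegrableOn (fun s => |A' s|) (Ioo 0 T) := hA'_int.abs
    have hreg : (volume.restrict (Ioo (0:ℝ) T)).Regular := by
      apply Measure.Regular.restrict_of_measure_ne_top
      simp [Real.volume_Ioo]
    obtain ⟨h, -, hhδ, hhcont, hhint⟩ := hA'_int.exists_hasCompactSupport_integral_sub_le hδpos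
    have hhδ' : (∫ s in Ioo (0:ℝ) T, |A' s - h s|) ≤ δ := by
      simpa [Real.norm_eq_abs] using hhδ
    set W : ℝ → ℝ := fun u => A 0 + ∫ x in (0:ℝ)..u, h x with hWdef
    have hWd : ∀ u, HasDerivAt W (h u) u := fun u =>
      ((hhcont.integral_hasStrictDerivAt 0 u).hasDerivAt).const_add (A 0)
    have hWc : Continuous W :=
      continuous_iff_continuousAt.mpr fun u => (hWd u).differentiableAt.continuousAt
    have hdiff_int : IntegrableOn (fun s => |A' s - h s|) (Ioo 0 T) := (hA'_int.sub hhint).abs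
    have hW0 : W 0 = A 0 := by simp [hWdef]
    have hWA : ∀ u ∈ Icc (0:ℝ) t, |W u - A u| ≤ δ := by
      intro u hu
      have huT : u ∈ Ico (0:ℝ) T := hIccT hu
      have h0u : Ioo (0:ℝ) u ⊆ Ioo 0 T := Ioo_subset_Ioo le_rfl huT.2.le
      have hh_int_u : IntegrableOn h (Ioo 0 u) :=
        (hhcont.integrableOn_Icc).mono_set Ioo_subset_Icc_self
      have hA'_int_u : IntegrableOn A' (Ioo 0 u) := hA'_int.mono_set h0u
      have heq : W u - A u = ∫ s in Ioo (0:ℝ) u, (h s - A' s) := by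
        rw [hFTC u huT, integral_sub hh_int_u hA'_int_u]
        have : (∫ x in (0:ℝ)..u, h x) = ∫ x in Ioo (0:ℝ) u, h x := by
          rw [intervalIntegral.integral_of_le hu.1, integral_Ioc_eq_integral_Ioo]
        simp only [hWdef, this]
        ring
      rw [heq]
      calc |∫ s in Ioo (0:ℝ) u, (h s - A' s)| ≤ ∫ s in Ioo (0:ℝ) u, |h s - A' s| := by
            simpa [Real.norm_eq_abs] using
              norm_integral_le_integral_norm (μ := volume.restrict (Ioo 0 u))
                (f := fun s => h s - A' s)
        _ = ∫ s in Ioo (0:ℝ) u, |A' s - h s| := by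
            simp only [abs_sub_comm]
        _ ≤ ∫ s in Ioo (0:ℝ) T, |A' s - h s| :=
            setIntegral_mono_set hdiff_int
              (Filter.Eventually.of_forall fun s => abs_nonneg _) h0u.eventuallyLE
        _ ≤ δ := hhδ'
    clear_value W
    have hWhalf : ∀ u ∈ Icc (0:ℝ) t, 1/2 ≤ W u := by
      intro u hu
      have h1 := (abs_le.mp (hWA u hu)).1
      have h2 := hA1 u (hIccT hu)
      linarith
    have hWpos : ∀ u ∈ Icc (0:ℝ) t, 0 < W u := fun u hu => by linarith [hWhalf u hu]
    have hlogW : (∫ x in (0:ℝ)..t, h x / W x) = Real.log (W t) - Real.log (W 0) := by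
      apply intervalIntegral.integral_eq_sub_of_hasDerivAt
      · intro x hx
        rw [uIcc_of_le ht0] at hx
        exact (hWd x).log (hWpos x hx).ne'
      · apply ContinuousOn.intervalIntegrable
        rw [uIcc_of_le ht0]
        exact hhcont.continuousOn.div hWc.continuousOn (fun x hx => (hWpos x hx).ne')
    have hintW : IntegrableOn (fun u => h u / W u) (Ioo 0 t) := by
      apply (ContinuousOn.integrableOn_Icc ?_).mono_set (Ioo_subset_Icc_self)
      exact hhcont.continuousOn.div hWc.continuousOn (fun x hx => (hWpos x hx).ne')
    have hpw : ∀ u ∈ Ioo (0:ℝ) t, |h u / W u - A' u / A u| ≤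
        2 * |A' u - h u| + 2 * δ * |A' u| := by
      intro u hu
      have huI : u ∈ Icc (0:ℝ) t := Ioo_subset_Icc_self hu
      have hAu : 1 ≤ A u := hA1 u (hIccT huI)
      have hAu0 : 0 < A u := by linarith
      have hWu : 1/2 ≤ W u := hWhalf u huI
      have hWu0 : 0 < W u := by linarith
      have hWAu : |W u - A u| ≤ δ := hWA u huI
      have hsplit : h u / W u - A' u / A u
          = (h u - A' u) / W u + A' u * (A u - W u) / (W u * A u) := by
        field_simp
        ring
      rw [hsplit]
      calc |(h u - A' u) / W u + A' u * (A u - W u) / (W u * A u)|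
          ≤ |(h u - A' u) / W u| + |A' u * (A u - W u) / (W u * A u)| := abs_add_le _ _
        _ ≤ 2 * |A' u - h u| + 2 * δ * |A' u| := by
            have e1 : |(h u - A' u) / W u| = |h u - A' u| / W u := by
              rw [abs_div, abs_of_pos hWu0]
            have e2 : |A' u * (A u - W u) / (W u * A u)|
                = |A' u| * |A u - W u| / (W u * A u) := by
              rw [abs_div, abs_mul, abs_of_pos (by positivity : (0:ℝ) < W u * A u)]
            have b1 : |h u - A' u| / W u ≤ 2 * |A' u - h u| := by
              rw [abs_sub_comm, div_le_iff₀ hWu0]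
              have c1 : 2 * |A' u - h u| * (1/2) ≤ 2 * |A' u - h u| * W u :=
                mul_le_mul_of_nonneg_left hWu (by positivity)
              linarith
            have b2 : |A' u| * |A u - W u| / (W u * A u) ≤ 2 * δ * |A' u| := by
              rw [div_le_iff₀ (by positivity : (0:ℝ) < W u * A u)]
              have hAW : |A u - W u| ≤ δ := by rw [abs_sub_comm]; exact hWAu
              have c1 : |A' u| * |A u - W u| ≤ |A' u| * δ :=
                mul_le_mul_of_nonneg_left hAW (abs_nonneg _)
              have c2 : (1:ℝ)/2 ≤ W u * A u := by nlinarith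
              have c3 : 2 * δ * |A' u| * (1/2) ≤ 2 * δ * |A' u| * (W u * A u) :=
                mul_le_mul_of_nonneg_left c2 (by positivity)
              nlinarith [abs_nonneg (A' u)]
            rw [e1, e2]; linarith
    -- bounds on integrals
    have b1 : (∫ s in Ioo (0:ℝ) t, |A' s - h s|) ≤ δ :=
      le_trans (setIntegral_mono_set hdiff_int
        (Filter.Eventually.of_forall fun s => abs_nonneg _) hsubT.eventuallyLE) hhδ'
    have b2 : (∫ s in Ioo (0:ℝ) t, |A' s|) ≤ C := by
      rw [hC]
      exact setIntegral_mono_set hA'abs_int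
        (Filter.Eventually.of_forall fun s => abs_nonneg _) hsubT.eventuallyLE
    have e2 : |(∫ u in Ioo (0:ℝ) t, h u / W u) - ∫ u in Ioo (0:ℝ) t, A' u / A u|
        ≤ 2 * δ + 2 * δ * C := by
      rw [← integral_sub hintW hA'At]
      have step1 : |∫ u in Ioo (0:ℝ) t, (h u / W u - A' u / A u)|
          ≤ ∫ u in Ioo (0:ℝ) t, |h u / W u - A' u / A u| := by
        simpa [Real.norm_eq_abs] using
          norm_integral_le_integral_norm (μ := volume.restrict (Ioo 0 t))
            (f := fun u => h u / W u - A' u / A u)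
      have step2 : (∫ u in Ioo (0:ℝ) t, |h u / W u - A' u / A u|)
          ≤ ∫ u in Ioo (0:ℝ) t, (2 * |A' u - h u| + 2 * δ * |A' u|) := by
        apply setIntegral_mono_on ((hintW.sub hA'At).abs)
          (((hdiff_int.mono_set hsubT).const_mul 2).add
            ((hA'abs_int.mono_set hsubT).const_mul (2 * δ)))
          measurableSet_Ioo hpw
      have step3 : (∫ u in Ioo (0:ℝ) t, (2 * |A' u - h u| + 2 * δ * |A' u|))
          = 2 * (∫ u in Ioo (0:ℝ) t, |A' u - h u|) + 2 * δ * ∫ u in Ioo (0:ℝ) t, |A' u| := by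
        rw [integral_add ((hdiff_int.mono_set hsubT).const_mul 2)
          ((hA'abs_int.mono_set hsubT).const_mul (2 * δ)), integral_const_mul,
          integral_const_mul]
      have : 2 * (∫ u in Ioo (0:ℝ) t, |A' u - h u|) + 2 * δ * (∫ u in Ioo (0:ℝ) t, |A' u|)
          ≤ 2 * δ + 2 * δ * C := by
        have h2 : 2 * δ * (∫ u in Ioo (0:ℝ) t, |A' u|) ≤ 2 * δ * C :=
          mul_le_mul_of_nonneg_left b2 (by positivity)
        linarith
      linarith [step1, step2, step3.le, step3.ge, this]
    have e1 : |Real.log (A t) - Real.log (W t)| ≤ 2 * δ := by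
      have := abs_log_sub_log_le (x := A t) (y := W t)
        (by linarith [hA1 t (hIccT ⟨ht0, le_refl t⟩)]) (hWhalf t ⟨ht0, le_refl t⟩)
      have h2 : |A t - W t| ≤ δ := by rw [abs_sub_comm]; exact hWA t ⟨ht0, le_refl t⟩
      linarith
    have e3 : (∫ x in (0:ℝ)..t, h x / W x) = ∫ x in Ioo (0:ℝ) t, h x / W x := by
      rw [intervalIntegral.integral_of_le ht0, integral_Ioc_eq_integral_Ioo]
    have hfinal : Real.log (A t) - (Real.log (A 0) + ∫ s in Ioo (0:ℝ) t, A' s / A s)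
        = (Real.log (A t) - Real.log (W t))
          + ((∫ u in Ioo (0:ℝ) t, h u / W u) - ∫ u in Ioo (0:ℝ) t, A' u / A u) := by
      have := hlogW
      rw [e3, hW0] at this
      linarith [this]
    rw [hfinal]
    calc |(Real.log (A t) - Real.log (W t))
          + ((∫ u in Ioo (0:ℝ) t, h u / W u) - ∫ u in Ioo (0:ℝ) t, A' u / A u)|
        ≤ |Real.log (A t) - Real.log (W t)|
          + |(∫ u in Ioo (0:ℝ) t, h u / W u) - ∫ u in Ioo (0:ℝ) t, A' u / A u| := abs_add_le _ _
      _ ≤ 2 * δ + (2 * δ + 2 * δ * C) := by linarith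
      _ ≤ ε := by linarith
  have h0 : |Real.log (A t) - (Real.log (A 0) + ∫ s in Ioo (0:ℝ) t, A' s / A s)| ≤ 0 := by
    apply le_of_forall_pos_le_add
    intro ε hε
    simpa using key ε hε
  have := abs_nonpos_iff.mp h0
  linarith [this.le, this.ge]

lemma gronwall_aux (K a t : ℝ) (hK : 0 < K) (ht : 0 ≤ t) (g : ℝ → ℝ)
    (hg : ContinuousOn g (Icc 0 t))
    (h : ∀ s ∈ Icc (0:ℝ) t, g s ≤ a + K * ∫ u in (0:ℝ)..s, g u) :
    g t ≤ a * Real.exp (K * t) := by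
  set g' : ℝ → ℝ := IccExtend ht ((Icc (0:ℝ) t).restrict g) with hg'def
  have hgeq : ∀ s ∈ Icc (0:ℝ) t, g' s = g s := by
    intro s hs
    simp [g', IccExtend_of_mem ht _ hs, Set.restrict_apply]; rfl
  have hg'c : Continuous g' := hg.restrict.Icc_extend'
  have hinteq : ∀ s ∈ Icc (0:ℝ) t, (∫ u in (0:ℝ)..s, g' u) = ∫ u in (0:ℝ)..s, g u := by
    intro s hs
    apply intervalIntegral.integral_congr
    intro u hu
    rw [uIcc_of_le hs.1] at hu
    exact hgeq u ⟨hu.1, hu.2.trans hs.2⟩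
  have h' : ∀ s ∈ Icc (0:ℝ) t, g' s ≤ a + K * ∫ u in (0:ℝ)..s, g' u := by
    intro s hs; rw [hgeq s hs, hinteq s hs]; exact h s hs
  set G : ℝ → ℝ := fun s => ∫ u in (0:ℝ)..s, g' u with hGdef
  have hGd : ∀ s, HasDerivAt G (g' s) s := fun s =>
    (hg'c.integral_hasStrictDerivAt 0 s).hasDerivAt
  set F : ℝ → ℝ := fun s => Real.exp (-(K * s)) * (G s + a / K) with hFdef
  have hE : ∀ s : ℝ, HasDerivAt (fun u : ℝ => Real.exp (-(K * u)))
      (Real.exp (-(K * s)) * (-K)) s := by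
    intro s
    have h1 : HasDerivAt (fun u : ℝ => -(K * u)) (-K) s := by
      have h0 := ((hasDerivAt_id' s).const_mul K).neg; rw [mul_one] at h0; exact h0
    exact h1.exp
  have hF : ∀ s, HasDerivAt F
      (Real.exp (-(K * s)) * (-K) * (G s + a / K) + Real.exp (-(K * s)) * g' s) s := by
    intro s
    exact (hE s).mul ((hGd s).add_const (a / K))
  have hKa : K * (a / K) = a := mul_div_cancel₀ a hK.ne'
  have hanti : AntitoneOn F (Icc 0 t) := by
    apply antitoneOn_of_deriv_nonpos (convex_Icc 0 t)
    · exact Continuous.continuousOn (continuous_iff_continuousAt.mpr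
        (fun x => (hF x).differentiableAt.continuousAt))
    · exact fun x _ => (hF x).differentiableAt.differentiableWithinAt
    · intro x hx
      rw [interior_Icc] at hx
      rw [(hF x).deriv]
      have hgb := h' x ⟨hx.1.le, hx.2.le⟩
      have hEp : (0:ℝ) < Real.exp (-(K * x)) := Real.exp_pos _
      have hprod : Real.exp (-(K * x)) * (g' x - (a + K * G x)) ≤ 0 :=
        mul_nonpos_of_nonneg_of_nonpos hEp.le (by linarith)
      nlinarith [hprod, hKa, hEp]
  have hF0 : F 0 = a / K := by
    simp [F, G, intervalIntegral.integral_same]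
  have hFt : F t ≤ a / K := by
    rw [← hF0]
    exact hanti ⟨le_refl 0, ht⟩ ⟨ht, le_refl t⟩ ht
  have h1 : G t + a / K ≤ Real.exp (K * t) * (a / K) := by
    calc G t + a / K = Real.exp (K * t) * (Real.exp (-(K * t)) * (G t + a / K)) := by
          rw [← mul_assoc, ← Real.exp_add]; simp
      _ ≤ Real.exp (K * t) * (a / K) :=
          mul_le_mul_of_nonneg_left hFt (Real.exp_pos _).le
  have h2 : K * G t ≤ K * (Real.exp (K * t) * (a / K) - a / K) :=
    mul_le_mul_of_nonneg_left (by linarith) hK.le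
  have h3 := h' t ⟨ht, le_refl t⟩
  rw [← hgeq t ⟨ht, le_refl t⟩]
  have h4 : K * (Real.exp (K * t) * (a / K) - a / K) = a * Real.exp (K * t) - a := by
    field_simp
  linarith [h3, h2]

theorem log_gronwall_intermediate_step
    (T K : ℝ) (hT : 0 < T) (hK : 0 < K)
    (α β A B A' : ℝ → ℝ)
    (hα_nonneg : ∀ t ∈ Ioo (0:ℝ) T, 0 ≤ α t)
    (hβ_nonneg : ∀ t ∈ Ioo (0:ℝ) T, 0 ≤ β t)
    (hα_int : IntegrableOn α (Ioo 0 T))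
    (hβ_int : IntegrableOn β (Ioo 0 T))
    (hA_ge_one : ∀ t ∈ Ico (0:ℝ) T, 1 ≤ A t)
    (hB_pos : ∀ t ∈ Ioo (0:ℝ) T, 0 < B t)
    (hA_int : IntegrableOn A (Ioo 0 T))
    (hB_int : IntegrableOn B (Ioo 0 T))
    (hA_cont : ContinuousOn A (Ico 0 T))
    (hA'_int : IntegrableOn A' (Ioo 0 T))
    (hA_deriv : ∀ᵐ t ∂(volume.restrict (Ioo (0:ℝ) T)), HasDerivAt A (A' t) t)
    (hFTC : ∀ t ∈ Ico (0:ℝ) T, A t = A 0 + ∫ s in Ioo (0:ℝ) t, A' s)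
    (hineq : ∀ᵐ t ∂(volume.restrict (Ioo (0:ℝ) T)),
      A' t + B t ≤ K * (α t + Real.log (B t)) * A t + β t) :
    ∀ t ∈ Ico (0:ℝ) T,
      Real.log (A t) + (∫ s in Ioo (0:ℝ) t, B s / (2 * A s))
          ≤ (Real.log (A 0) + K * (∫ s in Ioo (0:ℝ) t, α s)
              + (∫ s in Ioo (0:ℝ) t, β s) + 2 * K ^ 2 * t) * Real.exp (K * t) ∧
      A t ≤ Real.exp ((Real.log (A 0) + K * (∫ s in Ioo (0:ℝ) t, α s)
              + (∫ s in Ioo (0:ℝ) t, β s) + 2 * K ^ 2 * t) * Real.exp (K * t)) ∧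
      (∫ s in Ioo (0:ℝ) t, B s / A s)
          ≤ 2 * ((Real.log (A 0) + K * (∫ s in Ioo (0:ℝ) t, α s)
              + (∫ s in Ioo (0:ℝ) t, β s) + 2 * K ^ 2 * t) * Real.exp (K * t)) := by
  rintro t ⟨ht0, htT⟩
  have hsubT : Ioo (0:ℝ) t ⊆ Ioo 0 T := Ioo_subset_Ioo le_rfl htT.le
  have hIccT : Icc (0:ℝ) t ⊆ Ico 0 T := fun u hu => ⟨hu.1, lt_of_le_of_lt hu.2 htT⟩
  have hA0 : 1 ≤ A 0 := hA_ge_one 0 ⟨le_refl 0, hT⟩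
  have hAt1 : 1 ≤ A t := hA_ge_one t ⟨ht0, htT⟩
  -- Step A : pointwise a.e. differential inequality for log A
  have stepA : ∀ᵐ s ∂(volume.restrict (Ioo (0:ℝ) T)),
      A' s / A s + B s / (2 * A s) ≤ K * Real.log (A s) + (K * α s + β s + 2 * K ^ 2) := by
    filter_upwards [hineq, ae_restrict_mem measurableSet_Ioo] with s h1 hs
    have hA1 : 1 ≤ A s := hA_ge_one s ⟨hs.1.le, hs.2⟩
    have hApos : 0 < A s := by linarith
    have hBp := hB_pos s hs
    have hαs := hα_nonneg s hs
    have hβs := hβ_nonneg s hs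
    have hdiv : A' s / A s + B s / (2 * A s) = (A' s + B s / 2) / A s := by
      field_simp
    rw [hdiv, div_le_iff₀ hApos]
    have hKpos2 : (0:ℝ) < 2 * K := by linarith
    have l1 : Real.log (B s / A s / (2 * K)) ≤ B s / A s / (2 * K) - 1 :=
      Real.log_le_sub_one_of_pos (by positivity)
    have l2 : Real.log (2 * K) ≤ 2 * K - 1 := Real.log_le_sub_one_of_pos hKpos2
    have hsplit : Real.log (B s)
        = Real.log (B s / A s / (2 * K)) + Real.log (2 * K) + Real.log (A s) := by
      rw [Real.log_div (by positivity : B s / A s ≠ 0) hKpos2.ne',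
        Real.log_div hBp.ne' hApos.ne']
      ring
    have p1 : K * A s * Real.log (B s / A s / (2 * K))
        ≤ K * A s * (B s / A s / (2 * K) - 1) :=
      mul_le_mul_of_nonneg_left l1 (by positivity)
    have p2 : K * A s * Real.log (2 * K) ≤ K * A s * (2 * K - 1) :=
      mul_le_mul_of_nonneg_left l2 (by positivity)
    have p3 : K * A s * (B s / A s / (2 * K) - 1) = B s / 2 - K * A s := by
      field_simp
    have p4 : K * A s * Real.log (B s) = K * A s * Real.log (B s / A s / (2 * K))
        + K * A s * Real.log (2 * K) + K * A s * Real.log (A s) := by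
      rw [hsplit]; ring
    have p5 : 0 ≤ β s * (A s - 1) := mul_nonneg hβs (by linarith)
    have p6 : 0 ≤ K * A s := by positivity
    nlinarith [h1, p1, p2, p3, p4, p5, p6]
  -- the log FTC identity
  have hlog := logFTC hA_ge_one hA_int.aestronglyMeasurable hA'_int hFTC
  -- integrability facts
  have hA'A_T : IntegrableOn (fun s => A' s / A s) (Ioo 0 T) := by
    apply Integrable.mono hA'_int
      ((hA'_int.aestronglyMeasurable.aemeasurable.div
        hA_int.aestronglyMeasurable.aemeasurable).aestronglyMeasurable)
    filter_upwards [ae_restrict_mem measurableSet_Ioo] with s hs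
    have h1 : 1 ≤ A s := hA_ge_one s ⟨hs.1.le, hs.2⟩
    rw [Real.norm_eq_abs, Real.norm_eq_abs]; simp only [Pi.div_apply]; rw [abs_div, abs_of_pos (by linarith : (0:ℝ) < A s)]
    exact div_le_self (abs_nonneg _) h1
  have hB2A_T : IntegrableOn (fun s => B s / (2 * A s)) (Ioo 0 T) := by
    apply Integrable.mono hB_int
      ((hB_int.aestronglyMeasurable.aemeasurable.div
        (hA_int.aestronglyMeasurable.aemeasurable.const_mul 2)).aestronglyMeasurable)
    filter_upwards [ae_restrict_mem measurableSet_Ioo] with s hs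
    have h1 : 1 ≤ A s := hA_ge_one s ⟨hs.1.le, hs.2⟩
    rw [Real.norm_eq_abs, Real.norm_eq_abs]; simp only [Pi.div_apply]; rw [abs_div,
      abs_of_pos (by linarith : (0:ℝ) < 2 * A s)]
    exact div_le_self (abs_nonneg _) (by linarith)
  have hAne : ∀ u ∈ Icc (0:ℝ) t, A u ≠ 0 := fun u hu => by
    have := hA_ge_one u (hIccT hu); linarith
  have hlogA_cont : ContinuousOn (fun u => Real.log (A u)) (Icc 0 t) :=
    ContinuousOn.log (hA_cont.mono hIccT) hAne
  have hlogA_int : IntegrableOn (fun u => Real.log (A u)) (Icc 0 t) :=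
    hlogA_cont.integrableOn_Icc
  have hconstT : IntegrableOn (fun _ : ℝ => 2 * K ^ 2) (Ioo 0 T) :=
    (integrableOn_const_iff (C := 2 * K ^ 2)).mpr (Or.inr (by rw [Real.volume_Ioo]; exact ENNReal.ofReal_lt_top))
  have hψ : IntegrableOn (fun u => K * α u + β u + 2 * K ^ 2) (Ioo 0 T) :=
    ((hα_int.const_mul K).add hβ_int).add hconstT
  have hψ_nonneg : ∀ᵐ u ∂(volume.restrict (Ioo (0:ℝ) T)),
      0 ≤ K * α u + β u + 2 * K ^ 2 := by
    filter_upwards [ae_restrict_mem measurableSet_Ioo] with u hu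
    have := hα_nonneg u hu
    have := hβ_nonneg u hu
    nlinarith
  -- the function g and its continuity
  have hf2_nonneg : ∀ u ∈ Ioo (0:ℝ) T, 0 ≤ B u / (2 * A u) := fun u hu =>
    div_nonneg (hB_pos u hu).le (by linarith [hA_ge_one u ⟨hu.1.le, hu.2⟩])
  set g : ℝ → ℝ := fun s => Real.log (A s) + ∫ u in Ioo (0:ℝ) s, B u / (2 * A u) with hgdef
  have hg_cont : ContinuousOn g (Icc 0 t) := by
    apply hlogA_cont.add
    have h1 : ContinuousOn (fun s => ∫ u in Ioc (0:ℝ) s, B u / (2 * A u)) (Icc 0 t) :=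
      intervalIntegral.continuousOn_primitive
        ((integrableOn_Icc_iff_integrableOn_Ioo (a := 0) (b := t)).mpr (hB2A_T.mono_set hsubT))
    have h2 : (fun s => ∫ u in Ioc (0:ℝ) s, B u / (2 * A u))
        = fun s => ∫ u in Ioo (0:ℝ) s, B u / (2 * A u) :=
      funext fun s => integral_Ioc_eq_integral_Ioo
    rwa [h2] at h1
  have hlog_le_g : ∀ u ∈ Icc (0:ℝ) t, Real.log (A u) ≤ g u := by
    intro u hu
    have : 0 ≤ ∫ x in Ioo (0:ℝ) u, B x / (2 * A x) := by
      apply setIntegral_nonneg measurableSet_Ioo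
      intro x hx
      exact hf2_nonneg x ⟨hx.1, lt_of_lt_of_le hx.2 (le_trans hu.2 htT.le)⟩
    simp only [hgdef]
    linarith
  set a0 : ℝ := Real.log (A 0) + ∫ u in Ioo (0:ℝ) t, (K * α u + β u + 2 * K ^ 2) with ha0
  have hmain : ∀ s ∈ Icc (0:ℝ) t, g s ≤ a0 + K * ∫ u in (0:ℝ)..s, g u := by
    intro s hs
    have hsIco : s ∈ Ico (0:ℝ) T := hIccT hs
    have hsubs : Ioo (0:ℝ) s ⊆ Ioo 0 T := Ioo_subset_Ioo le_rfl hsIco.2.le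
    have hIccs : Icc (0:ℝ) s ⊆ Icc 0 t := Icc_subset_Icc le_rfl hs.2
    have int1 : IntegrableOn (fun u => A' u / A u) (Ioo 0 s) := hA'A_T.mono_set hsubs
    have int2 : IntegrableOn (fun u => B u / (2 * A u)) (Ioo 0 s) := hB2A_T.mono_set hsubs
    have intg : IntegrableOn g (Ioo 0 s) :=
      ((hg_cont.mono hIccs).integrableOn_Icc).mono_set Ioo_subset_Icc_self
    have intlog : IntegrableOn (fun u => Real.log (A u)) (Ioo 0 s) :=
      hlogA_int.mono_set (subset_trans Ioo_subset_Icc_self hIccs)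
    have intψs : IntegrableOn (fun u => K * α u + β u + 2 * K ^ 2) (Ioo 0 s) :=
      hψ.mono_set hsubs
    have e1 : g s = Real.log (A 0) + ∫ u in Ioo (0:ℝ) s, (A' u / A u + B u / (2 * A u)) := by
      simp only [hgdef]
      rw [hlog s hsIco, integral_add int1 int2]
      ring
    have e2 : (∫ u in Ioo (0:ℝ) s, (A' u / A u + B u / (2 * A u)))
        ≤ ∫ u in Ioo (0:ℝ) s, (K * Real.log (A u) + (K * α u + β u + 2 * K ^ 2)) := by
      apply integral_mono_ae (int1.add int2) ((intlog.const_mul K).add intψs)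
      exact ae_restrict_of_ae_restrict_of_subset hsubs stepA
    have e3 : (∫ u in Ioo (0:ℝ) s, (K * Real.log (A u) + (K * α u + β u + 2 * K ^ 2)))
        = K * (∫ u in Ioo (0:ℝ) s, Real.log (A u))
          + ∫ u in Ioo (0:ℝ) s, (K * α u + β u + 2 * K ^ 2) := by
      rw [integral_add (intlog.const_mul K) intψs, integral_const_mul]
    have e4 : (∫ u in Ioo (0:ℝ) s, (K * α u + β u + 2 * K ^ 2))
        ≤ ∫ u in Ioo (0:ℝ) t, (K * α u + β u + 2 * K ^ 2) := by
      apply setIntegral_mono_set (hψ.mono_set hsubT)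
        (ae_restrict_of_ae_restrict_of_subset hsubT hψ_nonneg)
        ((Ioo_subset_Ioo le_rfl hs.2).eventuallyLE)
    have e5 : (∫ u in Ioo (0:ℝ) s, Real.log (A u)) ≤ ∫ u in Ioo (0:ℝ) s, g u := by
      apply setIntegral_mono_on intlog intg measurableSet_Ioo
      intro u hu
      exact hlog_le_g u (hIccs (Ioo_subset_Icc_self hu))
    have e6 : (∫ u in (0:ℝ)..s, g u) = ∫ u in Ioo (0:ℝ) s, g u := by
      rw [intervalIntegral.integral_of_le hs.1, integral_Ioc_eq_integral_Ioo]
    have e7 : K * (∫ u in Ioo (0:ℝ) s, Real.log (A u)) ≤ K * ∫ u in Ioo (0:ℝ) s, g u :=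
      mul_le_mul_of_nonneg_left e5 hK.le
    rw [e6, e1, ha0]
    linarith
  have hgron := gronwall_aux K a0 t hK ht0 g hg_cont hmain
  -- identify a0 * exp (K t) with the claimed bound
  have hψval : (∫ u in Ioo (0:ℝ) t, (K * α u + β u + 2 * K ^ 2))
      = K * (∫ s in Ioo (0:ℝ) t, α s) + (∫ s in Ioo (0:ℝ) t, β s) + 2 * K ^ 2 * t := by
    have i1 : IntegrableOn (fun u => K * α u) (Ioo 0 t) := (hα_int.mono_set hsubT).const_mul K
    have i2 : IntegrableOn β (Ioo 0 t) := hβ_int.mono_set hsubT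
    have i12 : IntegrableOn (fun u => K * α u + β u) (Ioo 0 t) := i1.add i2
    have ic : IntegrableOn (fun _ : ℝ => 2 * K ^ 2) (Ioo 0 t) := hconstT.mono_set hsubT
    rw [integral_add i12 ic, integral_add i1 i2, integral_const_mul, setIntegral_const]
    rw [measureReal_def, Real.volume_Ioo]
    simp only [smul_eq_mul, sub_zero, ENNReal.toReal_ofReal ht0]
    ring
  set Q : ℝ := (Real.log (A 0) + K * (∫ s in Ioo (0:ℝ) t, α s)
      + (∫ s in Ioo (0:ℝ) t, β s) + 2 * K ^ 2 * t) * Real.exp (K * t) with hQ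
  have ha0Q : a0 * Real.exp (K * t) = Q := by
    rw [hQ, ha0, hψval]
    ring
  have main1 : Real.log (A t) + (∫ s in Ioo (0:ℝ) t, B s / (2 * A s)) ≤ Q := by
    rw [← ha0Q]
    exact hgron
  have hint_nonneg : 0 ≤ ∫ s in Ioo (0:ℝ) t, B s / (2 * A s) := by
    apply setIntegral_nonneg measurableSet_Ioo
    intro x hx
    exact hf2_nonneg x (hsubT hx)
  have hlogAt : Real.log (A t) ≤ Q := by linarith
  have hlogAt0 : 0 ≤ Real.log (A t) := Real.log_nonneg hAt1
  refine ⟨main1, ?_, ?_⟩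
  · calc A t = Real.exp (Real.log (A t)) := (Real.exp_log (by linarith)).symm
      _ ≤ Real.exp Q := Real.exp_le_exp.mpr hlogAt
  · have hBA : ∀ s : ℝ, B s / A s = 2 * (B s / (2 * A s)) := by
      intro s
      rw [← mul_div_assoc]
      exact (mul_div_mul_left (B s) (A s) (two_ne_zero)).symm
    calc (∫ s in Ioo (0:ℝ) t, B s / A s) = ∫ s in Ioo (0:ℝ) t, 2 * (B s / (2 * A s)) := by
          simp only [hBA]
      _ = 2 * ∫ s in Ioo (0:ℝ) t, B s / (2 * A s) := integral_const_mul 2 _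
      _ ≤ 2 * Q := by linarith
end
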